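/- Let n, r, s, d = (d_1,…,d_s) with d_i ≥ 2, δ_ := min((r+1)(n−r) − Σ_i C(d_i + r, r), n − 2r − s), and assume δ_ ≥ 0. Then max over k ∈ {0,…,r} of ((r+1−k)·(n−r+k) + Σ_i C(d_i + r − k, r − k) − 1 + 2·k·(n−r)) < 2·(r+1)·(n−r) − δ_. -/

import Mathlib

set_option maxHeartbeats 1000000


namespace Stmt16Aux

/-- difference of binomials along a diagonal -/
def W (b a j : ℕ) : ℤ := ((b+1+a+j).choose j : ℤ) - ((b+j).choose j : ℤ)

def D (b a m : ℕ) : ℤ := ((b+2+a+m).choose m : ℤ) - ((b+1+m).choose m : ℤ)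

lemma W_nonneg (b a j : ℕ) : 0 ≤ W b a j := by
  have h := Nat.choose_le_choose j (show b+j ≤ b+1+a+j by omega)
  unfold W
  have : ((b+j).choose j : ℤ) ≤ ((b+1+a+j).choose j : ℤ) := by exact_mod_cast h
  linarith

lemma W_mono_succ (b a j : ℕ) : W b a j ≤ W b a (j+1) := by
  unfold W
  have e1 : b+1+a+(j+1) = (b+1+a+j)+1 := by omega
  have e2 : b+(j+1) = (b+j)+1 := by omega
  rw [e1, e2, Nat.choose_succ_succ, Nat.choose_succ_succ]
  have h : ((b+j).choose (j+1) : ℤ) ≤ ((b+1+a+j).choose (j+1) : ℤ) := by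
    exact_mod_cast Nat.choose_le_choose (j+1) (show b+j ≤ b+1+a+j by omega)
  push_cast
  linarith

lemma W_mono (b a : ℕ) : Monotone (W b a) :=
  monotone_nat_of_le_succ (W_mono_succ b a)

lemma D_succ (b a m : ℕ) : D b a (m+1) = D b a m + W b a (m+1) := by
  unfold D W
  have e1 : b+2+a+(m+1) = (b+2+a+m)+1 := by omega
  have e2 : b+1+(m+1) = (b+1+m)+1 := by omega
  have e3 : b+1+a+(m+1) = (b+2+a+m) := by omega
  have e4 : b+(m+1) = b+1+m := by omega
  rw [e1, e2, e3, e4, Nat.choose_succ_succ, Nat.choose_succ_succ]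
  push_cast
  ring

lemma D_le (b a m : ℕ) : D b a m ≤ (m : ℤ) * W b a m := by
  induction m with
  | zero => simp [D]
  | succ m ih =>
    have h1 := W_mono_succ b a m
    have h2 : (m : ℤ) * W b a m ≤ (m : ℤ) * W b a (m+1) :=
      mul_le_mul_of_nonneg_left h1 (by positivity)
    rw [D_succ]
    push_cast
    linarith

lemma D_ge (b a m : ℕ) : ∀ p : ℕ, D b a m + (p : ℤ) * W b a m ≤ D b a (m+p) := by
  intro p
  induction p with
  | zero => simp
  | succ p ih =>
    have h1 : W b a m ≤ W b a (m+p+1) := W_mono b a (by omega)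
    have : D b a (m+(p+1)) = D b a (m+p) + W b a (m+p+1) := D_succ b a (m+p)
    rw [this]
    push_cast
    linarith

lemma interp (b a m r : ℕ) (hmr : m ≤ r) : (r : ℤ) * D b a m ≤ (m : ℤ) * D b a r := by
  obtain ⟨p, rfl⟩ : ∃ p, r = m + p := ⟨r - m, by omega⟩
  have h1 := D_le b a m
  have h2 := D_ge b a m p
  have h3 := W_nonneg b a m
  have h4 : (p : ℤ) * D b a m ≤ (p : ℤ) * ((m : ℤ) * W b a m) :=
    mul_le_mul_of_nonneg_left h1 (by positivity)
  have h5 : (m : ℤ) * (D b a m + (p : ℤ) * W b a m) ≤ (m : ℤ) * D b a (m+p) :=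
    mul_le_mul_of_nonneg_left h2 (by positivity)
  push_cast
  nlinarith [h4, h5]

lemma interp2 (di m r : ℕ) (hd : 2 ≤ di) (hmr : m ≤ r) :
    (r : ℤ) * (((di+m).choose m : ℤ) - ((m+2).choose m : ℤ)) ≤
      (m : ℤ) * (((di+r).choose r : ℤ) - ((r+2).choose r : ℤ)) := by
  rcases eq_or_lt_of_le hd with h | h
  · have e1 : di + m = m + 2 := by omega
    have e2 : di + r = r + 2 := by omega
    rw [e1, e2]
    simp
  · have := interp 1 (di - 3) m r hmr
    unfold D at this
    have e1 : 1+2+(di-3)+m = di + m := by omega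
    have e2 : 1+2+(di-3)+r = di + r := by omega
    have e3 : 1+1+m = m+2 := by omega
    have e4 : 1+1+r = r+2 := by omega
    rw [e1, e2, e3, e4] at this
    exact this

lemma interp3 (di m r : ℕ) (hd : 3 ≤ di) (hmr : m ≤ r) :
    (r : ℤ) * (((di+m).choose m : ℤ) - ((m+3).choose m : ℤ)) ≤
      (m : ℤ) * (((di+r).choose r : ℤ) - ((r+3).choose r : ℤ)) := by
  rcases eq_or_lt_of_le hd with h | h
  · have e1 : di + m = m + 3 := by omega
    have e2 : di + r = r + 3 := by omega
    rw [e1, e2]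
    simp
  · have := interp 2 (di - 4) m r hmr
    unfold D at this
    have e1 : 2+2+(di-4)+m = di + m := by omega
    have e2 : 2+2+(di-4)+r = di + r := by omega
    have e3 : 2+1+m = m+3 := by omega
    have e4 : 2+1+r = r+3 := by omega
    rw [e1, e2, e3, e4] at this
    exact this

lemma two_choose (m : ℕ) : 2 * (m+2).choose m = (m+1)*(m+2) := by
  induction m with
  | zero => rfl
  | succ m ih =>
    have h1 : (m+1+2).choose (m+1) = (m+2).choose m + (m+2).choose (m+1) :=
      Nat.choose_succ_succ _ _
    have h2 : (m+2).choose (m+1) = m+2 := Nat.choose_succ_self_right (m+1)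
    rw [h1, h2, Nat.mul_add, ih]
    ring

lemma six_choose (m : ℕ) : 6 * (m+3).choose m = (m+1)*(m+2)*(m+3) := by
  induction m with
  | zero => rfl
  | succ m ih =>
    have h1 : (m+1+3).choose (m+1) = (m+3).choose m + (m+3).choose (m+1) :=
      Nat.choose_succ_succ _ _
    have h2 : 2 * (m+3).choose (m+1) = (m+2)*(m+3) := two_choose (m+1)
    have : 6 * (m+1+3).choose (m+1) = 6 * (m+3).choose m + 3 * (2 * (m+3).choose (m+1)) := by
      rw [h1]; ring
    rw [this, ih, h2]
    ring

lemma core (n r s : ℕ) (d : Fin s → ℕ) (hd : ∀ i, 2 ≤ d i) (δ' : ℤ)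
    (h1 : δ' ≤ ((r : ℤ)+1) * ((n : ℤ) - r) - ∑ i, ((d i + r).choose r : ℤ))
    (h2 : δ' ≤ (n : ℤ) - 2*r - s) (hpos : 0 ≤ δ')
    (m : ℕ) (hmr : m ≤ r) :
    δ' + ∑ i, ((d i + m).choose m : ℤ) ≤ ((m : ℤ) + 1) * ((n : ℤ) - 2*r + m) := by
  rcases eq_or_lt_of_le hmr with rfl | hlt
  · nlinarith [h1]
  -- now m < r, in particular 1 ≤ r
  have hr1 : 1 ≤ r := by omega
  have hm0 : (0 : ℤ) ≤ m := by positivity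
  have hrm : (0 : ℤ) ≤ (r : ℤ) - m := by
    have : (m : ℤ) ≤ r := by exact_mod_cast hmr
    linarith
  match s, d, hd, h1, h2 with
  | 0, d, hd, h1, h2 =>
    simp only [Finset.univ_eq_empty, Finset.sum_empty] at *
    have e1 : 0 ≤ ((m : ℤ)+1) * ((n : ℤ) - 2*r - δ') := by
      apply mul_nonneg (by positivity)
      push_cast at h2; linarith
    have e2 : 0 ≤ (m : ℤ) * δ' := mul_nonneg hm0 hpos
    have e3 : 0 ≤ (m : ℤ) * ((m : ℤ)+1) := by positivity
    nlinarith [e1, e2, e3]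
  | 1, d, hd, h1, h2 =>
    simp only [Fin.sum_univ_one] at *
    rcases eq_or_lt_of_le (hd 0) with hd0 | hd0
    · -- d 0 = 2
      have e0 : d 0 + m = m + 2 := by omega
      rw [e0]
      have id2 : 2 * ((m+2).choose m : ℤ) = ((m : ℤ)+1)*((m : ℤ)+2) := by
        exact_mod_cast two_choose m
      have e1 : 0 ≤ ((m : ℤ)+1) * ((n : ℤ) - 2*r - 1 - δ') := by
        apply mul_nonneg (by positivity)
        push_cast at h2; linarith
      have e2 : 0 ≤ (m : ℤ) * δ' := mul_nonneg hm0 hpos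
      have e3 : 0 ≤ (m : ℤ) * ((m : ℤ)+1) := by positivity
      nlinarith [e1, e2, e3, id2]
    · -- d 0 ≥ 3
      have hint := interp3 (d 0) m r (by omega) hmr
      have id3m : 6 * ((m+3).choose m : ℤ) = ((m : ℤ)+1)*((m : ℤ)+2)*((m : ℤ)+3) := by
        exact_mod_cast six_choose m
      have id3r : 6 * ((r+3).choose r : ℤ) = ((r : ℤ)+1)*((r : ℤ)+2)*((r : ℤ)+3) := by
        exact_mod_cast six_choose r
      have hm1 : (m : ℤ) * ((d 0 + r).choose r : ℤ) ≤
          (m : ℤ) * (((r : ℤ)+1) * ((n : ℤ) - r) - δ') :=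
        mul_le_mul_of_nonneg_left (by linarith) hm0
      have e1 : 0 ≤ ((r : ℤ) - m) * ((n : ℤ) - 2*r - 1 - δ') := by
        apply mul_nonneg hrm
        push_cast at h2; linarith
      have e2 : 0 ≤ ((r : ℤ) - m) * ((r : ℤ) * m * ((r : ℤ) + m)) := by
        apply mul_nonneg hrm; positivity
      have hr0 : (0 : ℤ) < 6 * r := by
        have : (1 : ℤ) ≤ r := by exact_mod_cast hr1
        linarith
      rw [← mul_le_mul_iff_right₀ hr0]
      nlinarith [hint, hm1, e1, e2, id3m, id3r, hpos]
  | (s+2), d, hd, h1, h2 =>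
    have hsum : ∑ i, (r : ℤ) * (((d i + m).choose m : ℤ) - ((m+2).choose m : ℤ)) ≤
        ∑ i, (m : ℤ) * (((d i + r).choose r : ℤ) - ((r+2).choose r : ℤ)) :=
      Finset.sum_le_sum (fun i _ => interp2 (d i) m r (hd i) hmr)
    simp only [mul_sub, Finset.sum_sub_distrib, Finset.sum_const, Finset.card_univ,
      Fintype.card_fin, nsmul_eq_mul, ← Finset.mul_sum] at hsum
    have id2m : 2 * ((m+2).choose m : ℤ) = ((m : ℤ)+1)*((m : ℤ)+2) := by
      exact_mod_cast two_choose m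
    have id2r : 2 * ((r+2).choose r : ℤ) = ((r : ℤ)+1)*((r : ℤ)+2) := by
      exact_mod_cast two_choose r
    have hm1 : (m : ℤ) * (∑ i, ((d i + r).choose r : ℤ)) ≤
        (m : ℤ) * (((r : ℤ)+1) * ((n : ℤ) - r) - δ') :=
      mul_le_mul_of_nonneg_left (by linarith) hm0
    have e1 : 0 ≤ ((r : ℤ) - m) * ((n : ℤ) - 2*r - (s+2) - δ') := by
      apply mul_nonneg hrm
      push_cast at h2 ⊢; linarith
    have e2 : 0 ≤ ((r : ℤ) - m) * ((r : ℤ) * m * s) := by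
      apply mul_nonneg hrm; positivity
    have hr0 : (0 : ℤ) < 2 * r := by
      have : (1 : ℤ) ≤ r := by exact_mod_cast hr1
      linarith
    have hid2m : (r:ℤ)*(((s:ℤ)+2) * (2 * ((m+2).choose m : ℤ))) =
        (r:ℤ)*(((s:ℤ)+2)*(((m:ℤ)+1)*((m:ℤ)+2))) := by rw [id2m]
    have hid2r : (m:ℤ)*(((s:ℤ)+2) * (2 * ((r+2).choose r : ℤ))) =
        (m:ℤ)*(((s:ℤ)+2)*(((r:ℤ)+1)*((r:ℤ)+2))) := by rw [id2r]
    rw [← mul_le_mul_iff_right₀ hr0]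
    push_cast at hsum ⊢
    nlinarith [hsum, hm1, e1, e2, hid2m, hid2r, hpos]

end Stmt16Aux

/-- with `δ_ = min((r+1)(n−r) − Σ_i C(d_i + r, r), n − 2r − s) ≥ 0`, for every
`k ∈ {0, …, r}`:
`(r+1−k)·(n−r+k) + Σ_i C(d_i + r − k, r − k) − 1 + 2·k·(n−r) < 2·(r+1)·(n−r) − δ_`. -/
theorem stmt16 (n r s : ℕ) (d : Fin s → ℕ) (hd : ∀ i, 2 ≤ d i)
    (δ' : ℤ)
    (hδ' : δ' = min (((r : ℤ) + 1) * ((n : ℤ) - r) - ∑ i, ((d i + r).choose r : ℤ))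
      ((n : ℤ) - 2 * r - s))
    (hpos : 0 ≤ δ')
    (k : ℕ) (hk : k ≤ r) :
    ((r : ℤ) + 1 - k) * ((n : ℤ) - r + k) + (∑ i, ((d i + r - k).choose (r - k) : ℤ)) - 1 +
        2 * k * ((n : ℤ) - r) <
      2 * ((r : ℤ) + 1) * ((n : ℤ) - r) - δ' := by
  have h1 : δ' ≤ ((r : ℤ)+1) * ((n : ℤ) - r) - ∑ i, ((d i + r).choose r : ℤ) :=
    hδ' ▸ min_le_left _ _
  have h2 : δ' ≤ (n : ℤ) - 2*r - s := hδ' ▸ min_le_right _ _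
  have key := Stmt16Aux.core n r s d hd δ' h1 h2 hpos (r - k) (Nat.sub_le r k)
  have hdm : ∀ i : Fin s, d i + r - k = d i + (r - k) := fun i => by omega
  simp_rw [hdm]
  have hc : ((r - k : ℕ) : ℤ) = (r : ℤ) - k := by
    have := Nat.cast_sub (R := ℤ) hk
    omega
  rw [hc] at key
  nlinarith [key]
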